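/- Let n ≥ 1 be an integer and let 0 < ε < 1. Then there exists a polynomial q ∈ ℂ[X] of degree exactly n with leading coefficient (−1)^{n+1}·(3n)^n/n! such that for every z ∈ ℂ: (1/(2πi))·∮_{|w|=ε} e^{3nzw}/(w(w² − 1))^{n+1} dw = q(z), the integral being over the positively oriented circle of radius ε centered at 0. -/

import Mathlib

open Polynomial

section QnAux

open Complex Metric Finset

private lemma circleIntegral_add' {f g : ℂ → ℂ} {c : ℂ} {R : ℝ}
    (hf : CircleIntegrable f c R) (hg : CircleIntegrable g c R) :
    (∮ z in C(c, R), (f z + g z)) = (∮ z in C(c, R), f z) + ∮ z in C(c, R), g z := by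
  simp only [circleIntegral, smul_add]
  exact intervalIntegral.integral_add hf.out hg.out

private lemma circleIntegral_finset_sum' {ι : Type*} (s : Finset ι) (f : ι → ℂ → ℂ) {c : ℂ}
    {R : ℝ} (hf : ∀ i ∈ s, CircleIntegrable (f i) c R) :
    (∮ z in C(c, R), ∑ i ∈ s, f i z) = ∑ i ∈ s, ∮ z in C(c, R), f i z := by
  simp only [circleIntegral, Finset.smul_sum]
  exact intervalIntegral.integral_finset_sum fun i hi => (hf i hi).out

private lemma exp_split (n : ℕ) (a : ℂ) :
    ∃ Rm : ℂ → ℂ, DifferentiableOn ℂ Rm (Metric.ball 0 2) ∧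
      ∀ w : ℂ, Complex.exp (a * w) =
        (∑ k ∈ Finset.range (n + 1), (a * w) ^ k / (k.factorial : ℂ)) +
          w ^ (n + 1) * Rm w := by
  refine ⟨fun w => ∑' k : ℕ, a ^ (k + (n + 1)) * w ^ k / ((k + (n + 1)).factorial : ℂ), ?_, ?_⟩
  · have hsum : Summable fun k : ℕ => ‖a‖ ^ (n + 1) * ((2 * ‖a‖) ^ k / (k.factorial : ℝ)) :=
      (Real.summable_pow_div_factorial (2 * ‖a‖)).mul_left _
    apply Complex.differentiableOn_tsum_of_summable_norm
      (u := fun k : ℕ => ‖a‖ ^ (n + 1) * ((2 * ‖a‖) ^ k / (k.factorial : ℝ))) hsum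
      ?_ Metric.isOpen_ball ?_
    · intro k
      exact (((differentiable_const _).mul (differentiable_pow k)).div_const _).differentiableOn
    · intro k w hw
      have hw2 : ‖w‖ ≤ 2 := by
        have := mem_ball_iff_norm.mp hw
        simpa using this.le
      have h1 : ‖a ^ (k + (n + 1)) * w ^ k / ((k + (n + 1)).factorial : ℂ)‖
          = ‖a‖ ^ (k + (n + 1)) * ‖w‖ ^ k / (((k + (n + 1)).factorial : ℕ) : ℝ) := by
        rw [norm_div, norm_mul, norm_pow, norm_pow]
        norm_num
      rw [h1]
      have h2 : ‖a‖ ^ (n + 1) * ((2 * ‖a‖) ^ k / (k.factorial : ℝ))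
          = ‖a‖ ^ (k + (n + 1)) * 2 ^ k / (k.factorial : ℝ) := by
        rw [mul_pow, pow_add]
        ring
      rw [h2]
      have e1 : ‖a‖ ^ (k + (n + 1)) * ‖w‖ ^ k ≤ ‖a‖ ^ (k + (n + 1)) * 2 ^ k :=
        mul_le_mul_of_nonneg_left (pow_le_pow_left₀ (norm_nonneg w) hw2 k) (by positivity)
      have e2 : (k.factorial : ℝ) ≤ (((k + (n + 1)).factorial : ℕ) : ℝ) := by
        exact_mod_cast Nat.factorial_le (Nat.le_add_right k (n + 1))
      exact div_le_div₀ (by positivity) e1 (by positivity) e2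
  · intro w
    have hsum : Summable fun k : ℕ => (a * w) ^ k / (k.factorial : ℂ) := by
      apply Summable.of_norm
      apply Summable.congr (Real.summable_pow_div_factorial ‖a * w‖)
      intro k
      rw [norm_div, norm_pow]
      norm_num
    rw [Complex.exp_eq_exp_ℂ, NormedSpace.exp_eq_tsum_div]
    dsimp only
    rw [← Summable.sum_add_tsum_nat_add (n + 1) hsum]
    congr 1
    rw [← tsum_mul_left]
    apply tsum_congr
    intro k
    rw [mul_pow, pow_add, pow_add]
    have : ((k + (n + 1)).factorial : ℂ) ≠ 0 := by
      exact_mod_cast (Nat.factorial_pos _).ne'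
    field_simp
    ring

end QnAux

theorem Qn_is_polynomial (n : ℕ) (hn : 1 ≤ n) (ε : ℝ) (hε0 : 0 < ε) (hε1 : ε < 1) :
    ∃ q : ℂ[X], q.degree = (n : ℕ) ∧
      q.leadingCoeff = (-1 : ℂ) ^ (n + 1) * (3 * (n : ℂ)) ^ n / (n.factorial : ℂ) ∧
      ∀ z : ℂ,
        (1 / (2 * Real.pi * Complex.I)) *
          (∮ w in C(0, ε), Complex.exp (3 * (n : ℂ) * z * w) / (w * (w ^ 2 - 1)) ^ (n + 1)) =
        q.eval z := by
  classical
  set h : ℂ → ℂ := fun w => ((w ^ 2 - 1) ^ (n + 1))⁻¹ with hh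
  -- differentiability of h on the closed ball
  have hda : ∀ w ∈ Metric.closedBall (0 : ℂ) ε, DifferentiableAt ℂ h w := by
    intro w hw
    have hwε : ‖w‖ ≤ ε := by simpa using Metric.mem_closedBall.mp hw
    have hne : w ^ 2 - 1 ≠ 0 := by
      intro hcon
      rw [sub_eq_zero] at hcon
      have : ‖w ^ 2‖ = 1 := by rw [hcon]; simp
      rw [norm_pow] at this
      nlinarith [norm_nonneg w]
    exact (((differentiableAt_id.pow 2).sub_const 1).pow (n + 1)).inv (pow_ne_zero _ hne)
  have hdh : DifferentiableOn ℂ h (Metric.closedBall 0 ε) :=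
    fun w hw => (hda w hw).differentiableWithinAt
  have hch : ContinuousOn h (Metric.closedBall 0 ε) := hdh.continuousOn
  -- the elementary integrals
  set g : ℕ → ℂ → ℂ := fun k w => w ^ k * ((w ^ (n + 1))⁻¹ * h w) with hg
  set J : ℕ → ℂ := fun k => ∮ w in C(0, ε), g k w with hJ
  have hsph : ∀ w ∈ Metric.sphere (0 : ℂ) ε, w ≠ 0 := by
    intro w hw hw0
    rw [mem_sphere_iff_norm, hw0] at hw
    simp at hw
    exact hε0.ne' hw.symm
  have hgcont : ∀ k, ContinuousOn (g k) (Metric.sphere 0 ε) := by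
    intro k
    apply ContinuousOn.mul (continuous_pow k).continuousOn
    apply ContinuousOn.mul
    · exact ContinuousOn.inv₀ (continuous_pow (n + 1)).continuousOn
        (fun w hw => pow_ne_zero _ (hsph w hw))
    · exact hch.mono Metric.sphere_subset_closedBall
  have hgint : ∀ k, CircleIntegrable (g k) 0 ε := fun k => (hgcont k).circleIntegrable hε0.le
  -- compute J n
  have h0 : h 0 = (-1 : ℂ) ^ (n + 1) := by
    rw [hh]
    norm_num
    rw [← inv_pow, inv_neg, inv_one]
  have hJn : J n = 2 * Real.pi * Complex.I * (-1 : ℂ) ^ (n + 1) := by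
    have e1 : J n = ∮ w in C(0, ε), (w - 0)⁻¹ • h w := by
      apply circleIntegral.integral_congr hε0.le
      intro w hw
      have hw0 : w ≠ 0 := hsph w hw
      have hwn : w ^ n ≠ 0 := pow_ne_zero _ hw0
      simp only [hg, smul_eq_mul, sub_zero]
      rw [pow_succ, mul_inv]
      field_simp
    rw [e1, DifferentiableOn.circleIntegral_sub_inv_smul hdh (by simpa using hε0), h0]
    simp [smul_eq_mul]
  -- the polynomial
  set b : ℕ → ℂ := fun k =>
    1 / (2 * Real.pi * Complex.I) * ((3 * (n : ℂ)) ^ k / (k.factorial : ℂ) * J k) with hb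
  have hπ : (Real.pi : ℂ) ≠ 0 := by exact_mod_cast Real.pi_ne_zero
  have hbn : b n = (-1 : ℂ) ^ (n + 1) * (3 * (n : ℂ)) ^ n / (n.factorial : ℂ) := by
    rw [hb]
    simp only [hJn]
    have hfac : ((n.factorial : ℂ)) ≠ 0 := by exact_mod_cast (Nat.factorial_pos n).ne'
    field_simp
  have hbn0 : b n ≠ 0 := by
    rw [hbn]
    have hnne : (n : ℂ) ≠ 0 := Nat.cast_ne_zero.mpr (Nat.one_le_iff_ne_zero.mp hn)
    have h3n : (3 * (n : ℂ)) ≠ 0 := mul_ne_zero (by norm_num) hnne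
    have hfac : ((n.factorial : ℂ)) ≠ 0 := by exact_mod_cast (Nat.factorial_pos n).ne'
    apply div_ne_zero _ hfac
    exact mul_ne_zero (pow_ne_zero _ (by norm_num)) (pow_ne_zero _ h3n)
  set q : ℂ[X] := ∑ k ∈ Finset.range (n + 1), Polynomial.C (b k) * Polynomial.X ^ k with hq
  have hcoeff : ∀ m : ℕ, q.coeff m = if m ∈ Finset.range (n + 1) then b m else 0 := by
    intro m
    rw [hq, Polynomial.finset_sum_coeff]
    simp only [Polynomial.coeff_C_mul, Polynomial.coeff_X_pow, mul_ite, mul_one, mul_zero]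
    exact Finset.sum_ite_eq (Finset.range (n + 1)) m b
  have hcn : q.coeff n = b n := by
    rw [hcoeff n, if_pos (Finset.self_mem_range_succ n)]
  have hdeg : q.degree = (n : ℕ) := by
    apply Polynomial.degree_eq_of_le_of_coeff_ne_zero
    · refine (Polynomial.degree_sum_le _ _).trans ?_
      apply Finset.sup_le
      intro k hk
      refine (Polynomial.degree_C_mul_X_pow_le k (b k)).trans ?_
      exact_mod_cast Nat.lt_succ_iff.mp (Finset.mem_range.mp hk)
    · rw [hcn]; exact hbn0
  refine ⟨q, hdeg, ?_, ?_⟩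
  · rw [Polynomial.leadingCoeff, Polynomial.natDegree_eq_of_degree_eq_some hdeg, hcn, hbn]
  · intro z
    obtain ⟨Rm, hRd, hRs⟩ := exp_split n (3 * (n : ℂ) * z)
    have hsub2 : Metric.closedBall (0 : ℂ) ε ⊆ Metric.ball 0 2 :=
      Metric.closedBall_subset_ball (by linarith)
    have hRc : ContinuousOn Rm (Metric.closedBall 0 ε) :=
      (hRd.continuousOn).mono hsub2
    have key : (∮ w in C(0, ε), Complex.exp (3 * (n : ℂ) * z * w) / (w * (w ^ 2 - 1)) ^ (n + 1))
        = ∮ w in C(0, ε),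
            ((∑ k ∈ Finset.range (n + 1), ((3 * (n : ℂ) * z) ^ k / (k.factorial : ℂ)) * g k w)
              + Rm w * h w) := by
      apply circleIntegral.integral_congr hε0.le
      intro w hw
      have hw0 : w ≠ 0 := hsph w hw
      have hwn : w ^ (n + 1) ≠ 0 := pow_ne_zero _ hw0
      simp only [hg, hh]
      rw [div_eq_mul_inv, mul_pow, mul_inv, hRs w, add_mul, Finset.sum_mul]
      congr 1
      · apply Finset.sum_congr rfl
        intro k _
        rw [mul_pow]
        ring
      · field_simp
    have hintS : ∀ k ∈ Finset.range (n + 1), CircleIntegrable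
        (fun w => ((3 * (n : ℂ) * z) ^ k / (k.factorial : ℂ)) * g k w) 0 ε :=
      fun k _ => (continuousOn_const.mul (hgcont k)).circleIntegrable hε0.le
    have hintSum : CircleIntegrable
        (fun w => ∑ k ∈ Finset.range (n + 1),
          ((3 * (n : ℂ) * z) ^ k / (k.factorial : ℂ)) * g k w) 0 ε := by
      apply ContinuousOn.circleIntegrable hε0.le
      apply continuousOn_finset_sum
      intro k _
      exact continuousOn_const.mul (hgcont k)
    have hint2 : CircleIntegrable (fun w => Rm w * h w) 0 ε :=
      ((hRc.mono Metric.sphere_subset_closedBall).mul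
        (hch.mono Metric.sphere_subset_closedBall)).circleIntegrable hε0.le
    have hzero : (∮ w in C(0, ε), Rm w * h w) = 0 := by
      apply Complex.circleIntegral_eq_zero_of_differentiable_on_off_countable hε0.le
        Set.countable_empty (hRc.mul hch)
      intro w hw
      have hw' : w ∈ Metric.closedBall (0 : ℂ) ε := Metric.ball_subset_closedBall hw.1
      exact (hRd.differentiableAt (Metric.isOpen_ball.mem_nhds (hsub2 hw'))).mul (hda w hw')
    rw [key, circleIntegral_add' hintSum hint2, hzero, add_zero,
      circleIntegral_finset_sum' _ _ hintS]
    simp only [circleIntegral.integral_const_mul]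
    rw [hq, Polynomial.eval_finset_sum]
    simp only [Polynomial.eval_mul, Polynomial.eval_C, Polynomial.eval_pow, Polynomial.eval_X]
    rw [Finset.mul_sum]
    apply Finset.sum_congr rfl
    intro k _
    rw [hb]
    dsimp only
    rw [hJ]
    dsimp only
    rw [mul_pow]
    ring
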